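/- arXiv:1202.5147 — 5 statements merged into one kernel-verified Lean document; each statement's English description precedes it below -/
import Mathlib

section
/- Let i^* ⊣ i_* be an adjunction between categories E and D with unit η and counit ε, and suppose ε : i^* ∘ i_* ⟶ id_D is an isomorphism. Then for any functor F : E → C, the whiskered transformation F η : F ⟶ F ∘ i_* ∘ i^* is an isomorphism if and only if F maps every morphism φ of E such that i^*(φ) is an isomorphism to an isomorphism. -/
open CategoryTheory

/-- Let `i^* ⊣ i_*` be an adjunction with unit `η` and counit `ε`, and suppose the counit
is an isomorphism. For a functor `F : E ⥤ C`, the whiskered transformation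
`Fη : F ⟶ i^* ⋙ i_* ⋙ F` (i.e. `F` is `i`-local) is an isomorphism iff `F` maps every
morphism `φ` such that `i^* φ` is an isomorphism to an isomorphism. -/
theorem ilocal_iff_inverts
    {E D C : Type*} [Category E] [Category D] [Category C]
    (istar : E ⥤ D) (ilow : D ⥤ E) (adj : istar ⊣ ilow) [IsIso adj.counit]
    (F : E ⥤ C) :
    IsIso (CategoryTheory.Functor.whiskerRight adj.unit F) ↔
      ∀ {X Y : E} (φ : X ⟶ Y), IsIso (istar.map φ) → IsIso (F.map φ) := by
  constructor
  · intro h X Y φ hφ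
    have hnat : F.map φ ≫ (Functor.whiskerRight adj.unit F).app Y =
        (Functor.whiskerRight adj.unit F).app X ≫ F.map ((istar ⋙ ilow).map φ) := by
      simpa using (Functor.whiskerRight adj.unit F).naturality φ
    have : IsIso (ilow.map (istar.map φ)) := inferInstance
    have : IsIso (F.map ((istar ⋙ ilow).map φ)) := by
      simpa [Functor.comp_map] using (inferInstance : IsIso (F.map (ilow.map (istar.map φ))))
    have h1 : IsIso ((Functor.whiskerRight adj.unit F).app X) := inferInstance
    have h2 : IsIso ((Functor.whiskerRight adj.unit F).app Y) := inferInstance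
    have : IsIso (F.map φ ≫ (Functor.whiskerRight adj.unit F).app Y) := by
      rw [hnat]; infer_instance
    exact IsIso.of_isIso_comp_right (F.map φ) ((Functor.whiskerRight adj.unit F).app Y)
  · intro h
    have : ∀ X : E, IsIso ((Functor.whiskerRight adj.unit F).app X) := by
      intro X
      have htri : istar.map (adj.unit.app X) ≫ adj.counit.app (istar.obj X) = 𝟙 _ :=
        adj.left_triangle_components X
      have hε : IsIso (adj.counit.app (istar.obj X)) := inferInstance
      have : IsIso (istar.map (adj.unit.app X)) := by
        have : IsIso (istar.map (adj.unit.app X) ≫ adj.counit.app (istar.obj X)) := by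
          rw [htri]; infer_instance
        exact IsIso.of_isIso_comp_right _ (adj.counit.app (istar.obj X))
      have := h (adj.unit.app X) this
      simpa using this
    exact NatIso.isIso_of_isIso_app _
end

section
/- Let i^* ⊣ i_* be an adjunction between monoidal categories with i^* strong monoidal and counit an isomorphism, and let F : E → C be a strong monoidal functor that is i-local. Then the lax monoidal composite F ∘ i_* is strong monoidal, i.e. its unit and multiplication structure maps are isomorphisms. -/
open CategoryTheory MonoidalCategory Functor.LaxMonoidal

/-- Let `i^* ⊣ i_*` be an adjunction between monoidal categories with `i^*` strong
monoidal and invertible counit, `i_*` carrying the induced lax monoidal structure, and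
let `F : E ⥤ C` be a strong monoidal functor which is `i`-local (it inverts every
morphism inverted by `i^*`). Then the lax monoidal composite `F ∘ i_*` is strong
monoidal: its unit and multiplication structure maps are isomorphisms. -/
theorem ilocal_comp_pushforward_strong
    {E D C : Type*} [Category E] [Category D] [Category C]
    [MonoidalCategory E] [MonoidalCategory D] [MonoidalCategory C]
    (istar : E ⥤ D) [istar.Monoidal] (ilow : D ⥤ E) (adj : istar ⊣ ilow)
    [IsIso adj.counit]
    (F : E ⥤ C) [F.Monoidal]
    (hloc : ∀ {X Y : E} (φ : X ⟶ Y), IsIso (istar.map φ) → IsIso (F.map φ)) :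
    letI : ilow.LaxMonoidal := adj.rightAdjointLaxMonoidal
    IsIso (ε (ilow ⋙ F)) ∧ ∀ X Y : D, IsIso (μ (ilow ⋙ F) X Y) := by
  letI : ilow.LaxMonoidal := adj.rightAdjointLaxMonoidal
  have hη : IsIso (istar.map (ε ilow)) := by
    have h := adj.map_ε_comp_counit_app_unit
    have : istar.map (ε ilow) =
        Functor.OplaxMonoidal.η istar ≫ inv (adj.counit.app (𝟙_ D)) := by
      rw [← h]; simp
    rw [this]; infer_instance
  have hμ : ∀ X Y : D, IsIso (istar.map (μ ilow X Y)) := fun X Y => by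
    have h := adj.map_μ_comp_counit_app_tensor X Y
    have : istar.map (μ ilow X Y) =
        (Functor.OplaxMonoidal.δ istar _ _ ≫ (adj.counit.app X ⊗ₘ adj.counit.app Y)) ≫
          inv (adj.counit.app (X ⊗ Y)) := by
      rw [← h]; simp
    rw [this]
    have : IsIso (adj.counit.app X ⊗ₘ adj.counit.app Y) := by
      rw [MonoidalCategory.tensorHom_def]; infer_instance
    infer_instance
  constructor
  · rw [comp_ε]
    have := hloc _ hη
    infer_instance
  · intro X Y
    rw [comp_μ]
    have := hloc _ (hμ X Y)
    infer_instance
end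

section
/- Let F : C → D be a strong monoidal functor between monoidal categories where D is the category of modules over a commutative ring A. Suppose I is a non-unital commutative algebra object of C with a morphism ι : I → 1_C compatible with multiplication in the sense that the multiplication I ⊗ I → I equals (ι ⊗ id) followed by the unit action. If F(ι) : F(I) → A is an epimorphism of A-modules, then F(ι) is an isomorphism. -/
open CategoryTheory MonoidalCategory

/-- Let `F : C ⥤ ModuleCat A` be a strong monoidal functor, `I` a non-unital commutative
algebra object of `C` with multiplication `mul : I ⊗ I ⟶ I`, and `ι : I ⟶ 𝟙_ C` a
multiplicative morphism such that `mul` factors as `ι ⊗ 𝟙` followed by the unit action.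
If `F ι` is an epimorphism of `A`-modules, then `F ι` is an isomorphism. -/
theorem map_epi_iso_of_ideal
    {C : Type*} [Category C] [MonoidalCategory C] [BraidedCategory C]
    {A : Type*} [CommRing A]
    (F : C ⥤ ModuleCat A) [F.Monoidal]
    (I : C) (mul : I ⊗ I ⟶ I) (ι : I ⟶ 𝟙_ C)
    (hcomm : (β_ I I).hom ≫ mul = mul)
    (hmult : mul ≫ ι = (ι ⊗ₘ ι) ≫ (λ_ (𝟙_ C)).hom)
    (hfact : mul = (ι ⊗ₘ 𝟙 I) ≫ (λ_ I).hom)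
    (hepi : Epi (F.map ι)) :
    IsIso (F.map ι) := by
  open Functor.Monoidal Functor.LaxMonoidal Functor.OplaxMonoidal in
  -- the key categorical identity in `C`
  have key : (ι ⊗ₘ 𝟙 I) ≫ (λ_ I).hom = (𝟙 I ⊗ₘ ι) ≫ (ρ_ I).hom := by
    calc (ι ⊗ₘ 𝟙 I) ≫ (λ_ I).hom = mul := hfact.symm
      _ = (β_ I I).hom ≫ mul := hcomm.symm
      _ = (β_ I I).hom ≫ (ι ⊗ₘ 𝟙 I) ≫ (λ_ I).hom := by rw [← hfact]
      _ = (𝟙 I ⊗ₘ ι) ≫ (β_ I (𝟙_ C)).hom ≫ (λ_ I).hom := by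
          rw [← Category.assoc, ← BraidedCategory.braiding_naturality, Category.assoc]
      _ = (𝟙 I ⊗ₘ ι) ≫ (ρ_ I).hom := by rw [braiding_leftUnitor]
  -- transport it to `ModuleCat A`
  set g : F.obj I ⟶ 𝟙_ (ModuleCat A) := F.map ι ≫ η F with hg
  have e1 : (F.map ι ⊗ₘ F.map (𝟙 I)) ≫ μ F (𝟙_ C) I ≫ F.map (λ_ I).hom
      = (F.map (𝟙 I) ⊗ₘ F.map ι) ≫ μ F I (𝟙_ C) ≫ F.map (ρ_ I).hom := by
    rw [Functor.LaxMonoidal.μ_natural_assoc, Functor.LaxMonoidal.μ_natural_assoc,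
      ← F.map_comp, ← F.map_comp, key]
  have e2 : (g ⊗ₘ 𝟙 (F.obj I)) ≫ (λ_ (F.obj I)).hom
      = (𝟙 (F.obj I) ⊗ₘ g) ≫ (ρ_ (F.obj I)).hom := by
    have := e1
    rw [Functor.Monoidal.map_leftUnitor, Functor.Monoidal.map_rightUnitor,
      Functor.Monoidal.μ_δ_assoc, Functor.Monoidal.μ_δ_assoc, F.map_id] at this
    calc (g ⊗ₘ 𝟙 (F.obj I)) ≫ (λ_ (F.obj I)).hom
        = (F.map ι ⊗ₘ 𝟙 (F.obj I)) ≫ (η F ▷ F.obj I) ≫ (λ_ (F.obj I)).hom := by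
          rw [hg, ← tensorHom_id, tensorHom_comp_tensorHom_assoc, Category.comp_id]
      _ = (𝟙 (F.obj I) ⊗ₘ F.map ι) ≫ (F.obj I ◁ η F) ≫ (ρ_ (F.obj I)).hom := this
      _ = (𝟙 (F.obj I) ⊗ₘ g) ≫ (ρ_ (F.obj I)).hom := by
          rw [hg, ← id_tensorHom, tensorHom_comp_tensorHom_assoc, Category.comp_id]
  -- elementwise consequence
  have hel : ∀ x y : F.obj I, g x • y = g y • x := by
    intro x y
    have := ConcreteCategory.congr_hom e2 (x ⊗ₜ[A] y)
    simp only [CategoryTheory.comp_apply, ModuleCat.MonoidalCategory.tensorHom_tmul,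
      ModuleCat.id_apply, ModuleCat.MonoidalCategory.leftUnitor_hom_apply,
      ModuleCat.MonoidalCategory.rightUnitor_hom_apply] at this
    exact this
  -- `g` is surjective
  have hepig : Epi g := by rw [hg]; exact epi_comp _ _
  obtain ⟨y₀, hy₀⟩ := (ModuleCat.epi_iff_surjective g).mp hepig (1 : A)
  -- `g` is injective
  have hinj : Function.Injective g := by
    rw [injective_iff_map_eq_zero]
    intro x hx
    have := hel x y₀
    rw [hx, hy₀, one_smul, zero_smul] at this
    exact this.symm
  have : IsIso g := by
    rw [ConcreteCategory.isIso_iff_bijective]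
    exact ⟨hinj, (ModuleCat.epi_iff_surjective g).mp hepig⟩
  have hfι : F.map ι = g ≫ ε F := by
    rw [hg, Category.assoc, Functor.Monoidal.η_ε, Category.comp_id]
  rw [hfι]
  infer_instance
end

section
/- Let f, g : Spec(S) → X be morphisms of schemes with S a local ring and X quasi-separated, and suppose there exists a monoidal natural transformation α : f^* ⟶ g^*. Then the image f(y) of the closed point y of Spec(S) lies in the closure of {g(y)}. -/
open CategoryTheory AlgebraicGeometry TopologicalSpace MonoidalCategory

universe u

/-- The monoidal category of presheaves of `O_X`-modules on a scheme `X`. -/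
noncomputable abbrev SchemeModules (X : Scheme.{u}) :=
  PresheafOfModules.{u} (X.sheaf.val ⋙ forget₂ CommRingCat RingCat)

/-- The direct image functor on modules induced by a morphism of schemes `f : Y ⟶ X`. -/
noncomputable def schemePushforward {X Y : Scheme.{u}} (f : Y ⟶ X) :
    SchemeModules Y ⥤ SchemeModules X :=
  PresheafOfModules.pushforward (F := Opens.map f.base)
    (CategoryTheory.Functor.whiskerRight f.c (forget₂ CommRingCat RingCat))

namespace CutoffAux

variable {C : Type u₁} [Category.{v₁} C] (R : Cᵒᵖ ⥤ RingCat.{u}) (p : Cᵒᵖ → Prop)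

open Classical in
/-- The ideal by which we cut off. -/
noncomputable def idl (X : Cᵒᵖ) : Ideal (R.obj X) := if p X then ⊤ else ⊥

lemma mem_idl_of_p {X : Cᵒᵖ} (h : p X) (x : R.obj X) : x ∈ idl R p X := by
  simp [idl, if_pos h]

lemma idl_eq_bot {X : Cᵒᵖ} (h : ¬ p X) : idl R p X = ⊥ := by
  simp [idl, if_neg h]

/-- The value of the cutoff presheaf. -/
noncomputable def Q (X : Cᵒᵖ) : ModuleCat.{u} (R.obj X) :=
  ModuleCat.of (R.obj X) ((R.obj X) ⧸ idl R p X)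

/-- auxiliary linear map -/
noncomputable def mapAux {X Y : Cᵒᵖ} (f : X ⟶ Y) :
    ModuleCat.of (R.obj X) (R.obj X) ⟶
      (ModuleCat.restrictScalars (R.map f).hom).obj (Q R p Y) :=
  (PresheafOfModules.unit R).map f ≫
    (ModuleCat.restrictScalars (R.map f).hom).map (ModuleCat.ofHom (idl R p Y).mkQ)

@[simp]
lemma mapAux_apply {X Y : Cᵒᵖ} (f : X ⟶ Y) (x : R.obj X) :
    mapAux R p f x = Submodule.Quotient.mk (R.map f x) := rfl

lemma idl_le_ker (hp : ∀ {X Y : Cᵒᵖ} (f : X ⟶ Y), p X → p Y) {X Y : Cᵒᵖ} (f : X ⟶ Y) :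
    idl R p X ≤ LinearMap.ker (mapAux R p f).hom := by
  intro a ha
  by_cases hX : p X
  · have hY := hp f hX
    simp only [LinearMap.mem_ker]
    show Submodule.Quotient.mk (R.map f a) = 0
    rw [Submodule.Quotient.mk_eq_zero]
    exact mem_idl_of_p R p hY _
  · rw [idl_eq_bot R p hX] at ha
    simp only [Submodule.mem_bot] at ha
    subst ha
    simp only [LinearMap.mem_ker, map_zero]

/-- The restriction maps of the cutoff presheaf. -/
noncomputable def cmap (hp : ∀ {X Y : Cᵒᵖ} (f : X ⟶ Y), p X → p Y) {X Y : Cᵒᵖ} (f : X ⟶ Y) :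
    Q R p X ⟶ (ModuleCat.restrictScalars (R.map f).hom).obj (Q R p Y) :=
  ModuleCat.ofHom (Y := (ModuleCat.restrictScalars (R.map f).hom).obj (Q R p Y))
    (Submodule.liftQ (idl R p X) (mapAux R p f).hom (idl_le_ker R p hp f))

@[simp]
lemma cmap_mk (hp : ∀ {X Y : Cᵒᵖ} (f : X ⟶ Y), p X → p Y) {X Y : Cᵒᵖ} (f : X ⟶ Y) (a : R.obj X) :
    cmap R p hp f (Submodule.Quotient.mk a) = Submodule.Quotient.mk (R.map f a) := rfl

/-- The "cut off" presheaf of modules: `R ⧸ ⊤` where `p` holds, `R` elsewhere. -/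
noncomputable def cutoff (hp : ∀ {X Y : Cᵒᵖ} (f : X ⟶ Y), p X → p Y) :
    PresheafOfModules.{u} R where
  obj X := Q R p X
  map {X Y} f := cmap R p hp f
  map_id X := by
    ext x
    obtain ⟨a, rfl⟩ := Submodule.Quotient.mk_surjective _ x
    rw [cmap_mk]
    simp only [ModuleCat.restrictScalarsId'_inv_app, ModuleCat.restrictScalarsId'App_inv_apply]
    refine congrArg Submodule.Quotient.mk ?_
    show R.map (𝟙 X) a = a
    rw [R.map_id]
    rfl
  map_comp {X Y Z} f g := by
    ext x
    obtain ⟨a, rfl⟩ := Submodule.Quotient.mk_surjective _ x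
    rw [cmap_mk]
    erw [CategoryTheory.comp_apply, CategoryTheory.comp_apply]
    simp only [ModuleCat.restrictScalarsComp'_inv_app, ModuleCat.restrictScalarsComp'App_inv_apply]
    show Submodule.Quotient.mk (R.map (f ≫ g) a) = Submodule.Quotient.mk (R.map g (R.map f a))
    refine congrArg Submodule.Quotient.mk ?_
    rw [R.map_comp]
    rfl

@[simp]
lemma cutoff_map_mk (hp : ∀ {X Y : Cᵒᵖ} (f : X ⟶ Y), p X → p Y) {X Y : Cᵒᵖ} (f : X ⟶ Y) (a : R.obj X) :
    (cutoff R p hp).map f (Submodule.Quotient.mk a) = Submodule.Quotient.mk (R.map f a) := rfl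


/-- The canonical projection from the unit presheaf to the cutoff presheaf. -/
noncomputable def unitToCutoff (hp : ∀ {X Y : Cᵒᵖ} (f : X ⟶ Y), p X → p Y) :
    PresheafOfModules.unit R ⟶ cutoff R p hp where
  app X := ModuleCat.ofHom (idl R p X).mkQ
  naturality {X Y} f := by
    ext a
    rfl

@[simp]
lemma unitToCutoff_app (hp : ∀ {X Y : Cᵒᵖ} (f : X ⟶ Y), p X → p Y) (X : Cᵒᵖ) (a : R.obj X) :
    (unitToCutoff R p hp).app X a = Submodule.Quotient.mk a := rfl

/-- The unit `A ⟶ B` as a semilinear map. -/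
noncomputable def ringHomUnit {A B : RingCat.{u}} (h : A ⟶ B) :
    ModuleCat.of A A ⟶ (ModuleCat.restrictScalars h.hom).obj (ModuleCat.of B B) :=
  ModuleCat.ofHom (Y := (ModuleCat.restrictScalars h.hom).obj (ModuleCat.of B B)) {
  toFun x := h x
  map_add' x y := map_add h.hom x y
  map_smul' r x := by
    change h.hom (r * x) = h.hom r * h.hom x
    exact map_mul _ _ _ }

section Push

variable {D : Type u₂} [Category.{v₂} D] {F : C ⥤ D} {R' : Dᵒᵖ ⥤ RingCat.{u}}
  (φ : R ⟶ F.op ⋙ R')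
  (p' : Dᵒᵖ → Prop)

/-- The component of `φ`, retyped. -/
def phiApp (X : Cᵒᵖ) : R.obj X ⟶ R'.obj (F.op.obj X) := φ.app X

/-- Auxiliary map for `cutoffHom`. -/
noncomputable def pushAux (X : Cᵒᵖ) :
    ModuleCat.of (R.obj X) (R.obj X) ⟶
      (ModuleCat.restrictScalars (phiApp R φ X).hom).obj (Q R' p' (F.op.obj X)) :=
  ringHomUnit (phiApp R φ X) ≫
    (ModuleCat.restrictScalars (phiApp R φ X).hom).map (ModuleCat.ofHom (idl R' p' (F.op.obj X)).mkQ)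

@[simp]
lemma pushAux_apply (X : Cᵒᵖ) (a : R.obj X) :
    pushAux R φ p' X a = Submodule.Quotient.mk (phiApp R φ X a) := rfl

lemma idl_le_ker_pushAux (hc : ∀ X : Cᵒᵖ, p X → p' (F.op.obj X)) (X : Cᵒᵖ) :
    idl R p X ≤ LinearMap.ker (pushAux R φ p' X).hom := by
  intro a ha
  by_cases hX : p X
  · simp only [LinearMap.mem_ker]
    show Submodule.Quotient.mk (phiApp R φ X a) = 0
    rw [Submodule.Quotient.mk_eq_zero]
    exact mem_idl_of_p R' p' (hc X hX) _
  · rw [idl_eq_bot R p hX] at ha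
    simp only [Submodule.mem_bot] at ha
    subst ha
    simp only [LinearMap.mem_ker, map_zero]

variable (hp : ∀ {X Y : Cᵒᵖ} (f : X ⟶ Y), p X → p Y)
  (hp' : ∀ {X Y : Dᵒᵖ} (f : X ⟶ Y), p' X → p' Y)
  (hc : ∀ X : Cᵒᵖ, p X → p' (F.op.obj X))

/-- The canonical morphism from a cutoff presheaf to the pushforward of a compatible
cutoff presheaf. -/
noncomputable def cutoffHom :
    cutoff R p hp ⟶ (PresheafOfModules.pushforward.{u} φ).obj (cutoff R' p' hp') where
  app X := ModuleCat.ofHom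
    (Y := (ModuleCat.restrictScalars (phiApp R φ X).hom).obj (Q R' p' (F.op.obj X)))
    (Submodule.liftQ (idl R p X) (pushAux R φ p' X).hom (idl_le_ker_pushAux R p φ p' hc X))
  naturality {X Y} f := by
    refine ModuleCat.hom_ext (LinearMap.ext fun x => ?_)
    obtain ⟨a, rfl⟩ := Submodule.Quotient.mk_surjective _ x
    show Submodule.Quotient.mk (p := idl R' p' (F.op.obj Y)) (phiApp R φ Y (R.map f a)) =
      Submodule.Quotient.mk (p := idl R' p' (F.op.obj Y)) (R'.map (F.op.map f) (phiApp R φ X a))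
    exact congrArg Submodule.Quotient.mk (ConcreteCategory.congr_hom (φ.naturality f) a)

@[simp]
lemma cutoffHom_app_mk (X : Cᵒᵖ) (a : R.obj X) :
    (cutoffHom R p φ p' hp hp' hc).app X (Submodule.Quotient.mk a) =
      Submodule.Quotient.mk (p := idl R' p' (F.op.obj X)) (phiApp R φ X a) := rfl

lemma hom_to_pushforward_eq_zero
    (hthin : ∀ (A B : Dᵒᵖ) (u v : A ⟶ B), u = v)
    (hvanish : ∀ X : Cᵒᵖ, ∃ (Y : Cᵒᵖ) (u : X ⟶ Y), p Y ∧ F.op.obj X = F.op.obj Y)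
    (N : PresheafOfModules.{u} R')
    (h : cutoff R p hp ⟶ (PresheafOfModules.pushforward.{u} φ).obj N) : h = 0 := by
  refine PresheafOfModules.hom_ext fun X => ?_
  refine ModuleCat.hom_ext (LinearMap.ext fun x => ?_)
  obtain ⟨a, rfl⟩ := Submodule.Quotient.mk_surjective _ x
  obtain ⟨Y, u, hpY, heq⟩ := hvanish X
  have h1 := PresheafOfModules.naturality_apply h u (Submodule.Quotient.mk a)
  have h2 : (cutoff R p hp).map u (Submodule.Quotient.mk a) = 0 := by
    rw [cutoff_map_mk]
    exact (Submodule.Quotient.mk_eq_zero _).mpr (mem_idl_of_p R p hpY _)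
  erw [h2, map_zero] at h1
  have h3 : N.map (F.op.map u) (PresheafOfModules.Hom.app h X (Submodule.Quotient.mk a)) = 0 :=
    h1.symm
  set z := PresheafOfModules.Hom.app h X (Submodule.Quotient.mk a) with hz
  have hjk : F.op.map u ≫ eqToHom heq.symm = 𝟙 (F.op.obj X) := hthin _ _ _ _
  have h4 : N.map (F.op.map u ≫ eqToHom heq.symm) z = 0 := by
    rw [N.map_comp]
    erw [CategoryTheory.comp_apply, CategoryTheory.comp_apply]
    erw [h3]
    simp only [map_zero]
  rw [N.congr_map_apply hjk z] at h4
  have h5 : N.map (𝟙 (F.op.obj X)) z = z := by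
    rw [N.map_id]
    simp only [ModuleCat.restrictScalarsId'_inv_app, ModuleCat.restrictScalarsId'App_inv_apply]
    rfl
  rw [h5] at h4
  rw [hz] at h4
  exact h4

end Push


end CutoffAux

universe v u₁ v₁ u₂ v₂

lemma schemePushforward_map_zero {X Y : Scheme.{u}} (f : Y ⟶ X)
    (N₁ N₂ : SchemeModules Y) : (schemePushforward f).map (0 : N₁ ⟶ N₂) = 0 := by
  refine PresheafOfModules.hom_ext fun W => ?_
  refine ModuleCat.hom_ext (LinearMap.ext fun x => ?_)
  exact rfl

open CutoffAux Functor.LaxMonoidal in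
/-- Let `f, g : Spec S ⟶ X` be morphisms of schemes with `S` a local ring and `X`
quasi-separated, with pullback functors `F = f^*`, `G = g^*` (identified by being strong
monoidal and left adjoint to the direct images). If there exists a monoidal natural
transformation `α : f^* ⟶ g^*`, then the image `f(y)` of the closed point `y` of
`Spec S` lies in the closure of `{g(y)}`. -/
theorem image_closedPoint_mem_closure_of_tensor_transformation
    (S : Type u) [CommRing S] [IsLocalRing S]
    {X : Scheme.{u}} [QuasiSeparatedSpace X]
    (f g : Spec (CommRingCat.of S) ⟶ X)
    (F G : SchemeModules X ⥤ SchemeModules (Spec (CommRingCat.of S)))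
    [F.Monoidal] [G.Monoidal]
    (adjF : F ⊣ schemePushforward f) (adjG : G ⊣ schemePushforward g)
    (hα : ∃ α : F ⟶ G, NatTrans.IsMonoidal α) :
    f.base (IsLocalRing.closedPoint S) ∈
      closure {g.base (IsLocalRing.closedPoint S)} := by
  classical
  haveI : IsLocalRing (CommRingCat.of S) := inferInstanceAs (IsLocalRing S)
  obtain ⟨α, hmon⟩ := hα
  by_contra hcl
  set y := IsLocalRing.closedPoint S with hy
  let SpecS := Spec (CommRingCat.of S)
  let U : Opens ↑X := ⟨(closure {g.base y})ᶜ, isClosed_closure.isOpen_compl⟩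
  have hfy : f.base y ∈ U := hcl
  have hgy : g.base y ∉ U := fun hmem => hmem (subset_closure rfl)
  let RX := X.sheaf.val ⋙ forget₂ CommRingCat RingCat
  let RS := SpecS.sheaf.val ⋙ forget₂ CommRingCat RingCat
  let p₁ : (Opens ↑X)ᵒᵖ → Prop := fun W => (W.unop : Set ↑X) ⊆ (U : Set ↑X)
  have hp₁ : ∀ {A B : (Opens ↑X)ᵒᵖ} (u : A ⟶ B), p₁ A → p₁ B := by
    intro A B u hA
    exact Set.Subset.trans (SetLike.coe_subset_coe.mpr (leOfHom u.unop)) hA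
  let p₂ : (Opens ↑SpecS)ᵒᵖ → Prop := fun V => y ∉ V.unop
  have hp₂ : ∀ {A B : (Opens ↑SpecS)ᵒᵖ} (u : A ⟶ B), p₂ A → p₂ B := by
    intro A B u hA hmem
    exact hA (leOfHom u.unop hmem)
  let B : SchemeModules X := cutoff RX p₁ @hp₁
  let M : SchemeModules SpecS := cutoff RS p₂ @hp₂
  let u1 : 𝟙_ (SchemeModules X) ⟶ B := unitToCutoff RX p₁ @hp₁
  let φg : RX ⟶ (Opens.map g.base).op ⋙ RS :=
    CategoryTheory.Functor.whiskerRight g.c (forget₂ CommRingCat RingCat)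
  have hc : ∀ W : (Opens ↑X)ᵒᵖ, p₁ W → p₂ ((Opens.map g.base).op.obj W) := by
    intro W hW hmem
    exact hgy (hW hmem)
  let q : B ⟶ (schemePushforward g).obj M := cutoffHom RX p₁ φg p₂ @hp₁ @hp₂ hc
  -- every morphism from B to a pushforward along f is zero
  have hUtop : f ⁻¹ᵁ U = ⊤ := Scheme.preimage_eq_top_of_closedPoint_mem f hfy
  have hvanish : ∀ W : (Opens ↑X)ᵒᵖ, ∃ (W' : (Opens ↑X)ᵒᵖ) (u : W ⟶ W'),
      p₁ W' ∧ (Opens.map f.base).op.obj W = (Opens.map f.base).op.obj W' := by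
    intro W
    refine ⟨Opposite.op (W.unop ⊓ U), (homOfLE inf_le_left).op, fun x hx => hx.2, ?_⟩
    refine congrArg Opposite.op (Opens.ext ?_)
    show f.base ⁻¹' (W.unop : Set ↑X) = f.base ⁻¹' ((W.unop : Set ↑X) ∩ (U : Set ↑X))
    rw [Set.preimage_inter]
    have : f.base ⁻¹' (U : Set ↑X) = Set.univ := by
      have := congrArg (fun (V : Opens ↑SpecS) => (V : Set ↑SpecS)) hUtop
      simpa using this
    rw [this, Set.inter_univ]
  have hzero : ∀ (N : SchemeModules SpecS) (h : B ⟶ (schemePushforward f).obj N), h = 0 := by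
    intro N h
    exact hom_to_pushforward_eq_zero RX p₁ _ @hp₁
      (fun A B' u v => Subsingleton.elim u v) hvanish N h
  -- hence the identity of F.obj B is zero
  have hid : 𝟙 (F.obj B) = 0 := by
    have hsub : ∀ (a b : B ⟶ (schemePushforward f).obj (F.obj B)), a = b := fun a b =>
      (hzero _ a).trans (hzero _ b).symm
    exact (adjF.homEquiv B (F.obj B)).injective (hsub _ _)
  have hαB : α.app B = 0 := by
    rw [← Category.id_comp (α.app B), hid, Limits.zero_comp]
  have hεGu : ε G ≫ G.map u1 = 0 := by
    have h1 : ε F ≫ α.app (𝟙_ (SchemeModules X)) = ε G := hmon.unit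
    rw [← h1, Category.assoc, ← α.naturality u1, hαB, Limits.comp_zero, Limits.comp_zero]
  have hGu : G.map u1 = 0 := by
    have : ε G ≫ G.map u1 = ε G ≫ 0 := by rw [hεGu, Limits.comp_zero]
    exact (cancel_epi (ε G)).mp this
  -- conclude that u1 ≫ q = 0
  have hq0 : u1 ≫ q = 0 := by
    let h2 := (adjG.homEquiv B M).symm q
    have e1 := adjG.homEquiv_naturality_left u1 h2
    rw [Equiv.apply_symm_apply] at e1
    rw [hGu, Limits.zero_comp] at e1
    have e2 : (adjG.homEquiv (𝟙_ (SchemeModules X)) M) 0 = 0 := by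
      rw [Adjunction.homEquiv_apply, schemePushforward_map_zero, Limits.comp_zero]
    rw [e2] at e1
    exact e1.symm
  -- evaluate at the top open
  have hval : PresheafOfModules.Hom.app (u1 ≫ q) (Opposite.op ⊤)
      (1 : RX.obj (Opposite.op ⊤)) = 0 := by
    rw [hq0]; rfl
  have hval2 : Submodule.Quotient.mk (p := idl RS p₂ ((Opens.map g.base).op.obj
      (Opposite.op ⊤))) (phiApp RX φg (Opposite.op ⊤) (1 : RX.obj (Opposite.op ⊤))) = 0 := hval
  rw [Submodule.Quotient.mk_eq_zero] at hval2
  have hmem : y ∈ (Opens.map g.base).obj (⊤ : Opens ↑X) := trivial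
  rw [idl_eq_bot RS p₂ (X := (Opens.map g.base).op.obj (Opposite.op ⊤))
    (fun hn => hn hmem), Submodule.mem_bot] at hval2
  rw [map_one] at hval2
  -- 1 = 0 in the sections over the preimage of ⊤, contradiction via the stalk at y
  have := congrArg (⇑(SpecS.presheaf.germ ((Opens.map g.base).obj (⊤ : Opens ↑X)) y hmem)) hval2
  erw [map_one, map_zero] at this
  haveI hloc : IsLocalRing (SpecS.presheaf.stalk y) := SpecS.toLocallyRingedSpace.isLocalRing y
  exact one_ne_zero (α := SpecS.presheaf.stalk y) this
end

section
/- Let C be a cocomplete symmetric monoidal category with cocontinuous tensor product and unit 1. Then the algebraic monad END(1), with END(1)(n) = Hom(1, 1^{⊕n}), is commutative: for t ∈ END(1)(n) and t' ∈ END(1)(m), the two composites 1 → 1^{⊕n} → (1^{⊕m})^{⊕n} ≅ 1^{⊕(n×m)} (applying t then t'^{⊕n}) and 1 → 1^{⊕m} → (1^{⊕n})^{⊕m} ≅ 1^{⊕(n×m)} (applying t' then t^{⊕m}) agree under the canonical identifications. -/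
open CategoryTheory Limits MonoidalCategory

/-- In a cocomplete symmetric monoidal category with cocontinuous tensor product, the
algebraic monad `END(1)`, with `END(1)(n) = Hom(1, 1^{⊕n})`, is commutative: for
`t : 1 ⟶ 1^{⊕n}` and `t' : 1 ⟶ 1^{⊕m}`, applying `t` and then `t'` on each summand
agrees with applying `t'` and then `t` on each summand, under the canonical
identifications `(1^{⊕m})^{⊕n} ≅ 1^{⊕n} ⊗ 1^{⊕m} ≅ (1^{⊕n})^{⊕m}`. -/
theorem END_unit_commutative
    {C : Type*} [Category C] [MonoidalCategory C] [SymmetricCategory C] [HasColimits C]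
    [∀ X : C, PreservesColimits (tensorLeft X)]
    [∀ X : C, PreservesColimits (tensorRight X)]
    {n m : ℕ} (t : 𝟙_ C ⟶ ∐ (fun _ : Fin n => 𝟙_ C))
    (t' : 𝟙_ C ⟶ ∐ (fun _ : Fin m => 𝟙_ C)) :
    t ≫ Sigma.desc (fun i => (λ_ (𝟙_ C)).inv ≫
        (Sigma.ι (fun _ : Fin n => 𝟙_ C) i ⊗ₘ t')) =
      t' ≫ Sigma.desc (fun j => (λ_ (𝟙_ C)).inv ≫
        (t ⊗ₘ Sigma.ι (fun _ : Fin m => 𝟙_ C) j)) := by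
  have L : Sigma.desc (fun i => (λ_ (𝟙_ C)).inv ≫
      (Sigma.ι (fun _ : Fin n => 𝟙_ C) i ⊗ₘ t')) = (ρ_ _).inv ≫ (𝟙 _ ⊗ₘ t') := by
    ext i
    simp [MonoidalCategory.tensorHom_def, unitors_inv_equal]
  have R : Sigma.desc (fun j => (λ_ (𝟙_ C)).inv ≫
      (t ⊗ₘ Sigma.ι (fun _ : Fin m => 𝟙_ C) j)) = (λ_ _).inv ≫ (t ⊗ₘ 𝟙 _) := by
    ext j
    simp [MonoidalCategory.tensorHom_def', unitors_inv_equal, unitors_equal]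
  rw [L, R]
  rw [id_tensorHom, tensorHom_id, rightUnitor_inv_naturality_assoc, leftUnitor_inv_naturality_assoc,
    ← whisker_exchange, unitors_inv_equal]
end
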